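/- In a Cu-semigroup S, if elements with a 'compact ideal generator' are dense in the following sense — for all x', x with x' ≪ x there exist y', y with x' ≪ y' ≪ y ≪ x and y ≤ ∞·y' — then for every pair c' ≪ c in S there exist e', e with c' ≪ e' ≪ e ≪ c and e ≪ ∞·e'. -/
import Mathlib


/-- A Cu-semigroup: a positively ordered abelian monoid in which every
increasing sequence has a supremum and addition preserves such suprema. -/
class CuSemigroup (S : Type*) extends AddCommMonoid S, PartialOrder S where
  add_le_add' : ∀ {a b c d : S}, a ≤ b → c ≤ d → a + c ≤ b + d
  zero_le' : ∀ a : S, 0 ≤ a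
  /-- supremum of an increasing sequence -/
  seqSup : (ℕ → S) → S
  le_seqSup : ∀ (f : ℕ → S), Monotone f → ∀ n, f n ≤ seqSup f
  seqSup_le : ∀ (f : ℕ → S), Monotone f → ∀ b : S, (∀ n, f n ≤ b) → seqSup f ≤ b
  add_seqSup : ∀ (f : ℕ → S) (a : S), Monotone f →
    seqSup (fun n => a + f n) = a + seqSup f

variable {S : Type*} [CuSemigroup S]

/-- The way-below relation in a Cu-semigroup. -/
def wayBelow (x y : S) : Prop :=
  ∀ f : ℕ → S, Monotone f → y ≤ CuSemigroup.seqSup f → ∃ n, x ≤ f n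

infix:50 " ≪ " => wayBelow

/-- ∞·x := sup_n (n·x). -/
def infty (x : S) : S := CuSemigroup.seqSup (fun n => n • x)

lemma wayBelow_le {a b : S} (hab : a ≪ b) : a ≤ b := by
  obtain ⟨n, hn⟩ := hab (fun _ => b) (fun _ _ _ => le_refl b)
    (CuSemigroup.le_seqSup _ (fun _ _ _ => le_refl b) 0)
  exact hn

lemma wayBelow_of_le {a b c : S} (hab : a ≪ b) (hbc : b ≤ c) : a ≪ c :=
  fun f hf hc => hab f hf (le_trans hbc hc)

lemma nsmul_mono_nat (x : S) : Monotone (fun n : ℕ => n • x) := by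
  apply monotone_nat_of_le_succ
  intro n
  have : n • x + 0 ≤ n • x + x :=
    CuSemigroup.add_le_add' (le_refl _) (CuSemigroup.zero_le' x)
  simpa [succ_nsmul] using this

lemma nsmul_le_nsmul' {x y : S} (hxy : x ≤ y) (n : ℕ) : n • x ≤ n • y := by
  induction n with
  | zero => simp
  | succ k ih =>
    have := CuSemigroup.add_le_add' ih hxy
    simpa [succ_nsmul] using this

lemma infty_mono {x y : S} (hxy : x ≤ y) : infty x ≤ infty y := by
  apply CuSemigroup.seqSup_le _ (nsmul_mono_nat x)
  intro n
  exact le_trans (nsmul_le_nsmul' hxy n)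
    (CuSemigroup.le_seqSup _ (nsmul_mono_nat y) n)

theorem stmt0
    (hdense : ∀ x' x : S, x' ≪ x →
      ∃ y' y : S, x' ≪ y' ∧ y' ≪ y ∧ y ≪ x ∧ y ≤ infty y')
    (c' c : S) (h : c' ≪ c) :
    ∃ e' e : S, c' ≪ e' ∧ e' ≪ e ∧ e ≪ c ∧ e ≪ infty e' := by
  obtain ⟨y', y, hcy', hy'y, hyc, hyinf⟩ := hdense c' c h
  obtain ⟨w', w, hy'w', hw'w, hwy, _⟩ := hdense y' y hy'y
  refine ⟨w', w, ?_, hw'w, ?_, ?_⟩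
  · exact wayBelow_of_le hcy' (wayBelow_le hy'w')
  · exact wayBelow_of_le hwy (wayBelow_le hyc)
  · exact wayBelow_of_le hwy
      (le_trans hyinf (infty_mono (wayBelow_le hy'w')))
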